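/- Exhaustion of the level sets. Let ε > 0 and suppose G is a (c,d)-regular (⌊2k/(1+2ε)+1⌋, 1/2+ε)-expander, and suppose |X_+| ≤ k. Then for every ℓ ≥ 1, |S_ℓ| ≥ 2ε·|S' ∖ ∪_{1≤ℓ'<ℓ} S_{ℓ'}|; consequently |S' ∖ ∪_{1≤ℓ'≤ℓ} S_{ℓ'}| ≤ (1−2ε)^ℓ·|S'| for all ℓ ≥ 0, and S_ℓ = ∅ whenever (1−2ε)^{ℓ−1}·|S'| < 1. -/

import Mathlib

open Finset

namespace MP

/-- Neighborhood of a left vertex `i ∈ X`: the measurements involving `i`. -/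
def nhdX {n m : ℕ} (A : Fin m → Fin n → Bool) (i : Fin n) : Finset (Fin m) :=
  Finset.univ.filter (fun j => A j i = true)

/-- Neighborhood of a right vertex `j ∈ Y`. -/
def nhdY {n m : ℕ} (A : Fin m → Fin n → Bool) (j : Fin m) : Finset (Fin n) :=
  Finset.univ.filter (fun i => A j i = true)

/-- `Γ(S)`, the set of neighbors of `S ⊆ X`. -/
def Gam {n m : ℕ} (A : Fin m → Fin n → Bool) (S : Finset (Fin n)) : Finset (Fin m) :=
  S.biUnion (nhdX A)

/-- The measurement vector `y = A x`. -/
noncomputable def yvec {n m : ℕ} (A : Fin m → Fin n → Bool) (x : Fin n → ℝ) (j : Fin m) : ℝ :=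
  ∑ i ∈ nhdY A j, x i

/-- Message from measurement `j` to variable `i`, given current variable messages `z`:
`y_j - ∑_{k ∈ N_y(j) \ {i}} z_k`. -/
noncomputable def msgY {n m : ℕ} (A : Fin m → Fin n → Bool) (x z : Fin n → ℝ)
    (j : Fin m) (i : Fin n) : ℝ :=
  yvec A x j - ∑ k ∈ (nhdY A j).erase i, z k

/-- The algorithm's estimate `x̂^s` (equal to the variable-to-check message `m_{i→j}^s`,
which does not depend on `j`).  At odd times it is the min of incoming check messages;
at even times `s+1` it is `max(0, max of incoming check messages)`. -/
noncomputable def xhat {n m : ℕ} (A : Fin m → Fin n → Bool) (x : Fin n → ℝ) :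
    ℕ → Fin n → ℝ
  | 0 => fun _ => 0
  | s + 1 => fun i =>
      if Even (s + 1) then
        max 0 (sSup ((fun l => msgY A x (xhat A x s) l i) '' (↑(nhdX A i) : Set (Fin m))))
      else
        sInf ((fun l => msgY A x (xhat A x s) l i) '' (↑(nhdX A i) : Set (Fin m)))

/-- The variable-to-check message `m_{i→j}^s` (independent of `j`). -/
noncomputable def mXY {n m : ℕ} (A : Fin m → Fin n → Bool) (x : Fin n → ℝ)
    (s : ℕ) (i : Fin n) (_j : Fin m) : ℝ := xhat A x s i

/-- The check-to-variable message `m_{j→i}^s`. -/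
noncomputable def mYX {n m : ℕ} (A : Fin m → Fin n → Bool) (x : Fin n → ℝ)
    (s : ℕ) (j : Fin m) (i : Fin n) : ℝ := msgY A x (xhat A x s) j i

/-- `G` is `(c,d)`-regular. -/
def IsRegular {n m : ℕ} (A : Fin m → Fin n → Bool) (c d : ℕ) : Prop :=
  (∀ i, (nhdX A i).card = c) ∧ (∀ j, (nhdY A j).card = d)

/-- `G` is a `(kk, α)`-expander (w.r.t. left degree `c`). -/
def IsExpander {n m : ℕ} (A : Fin m → Fin n → Bool) (c kk : ℕ) (α : ℝ) : Prop :=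
  ∀ S : Finset (Fin n), S.card ≤ kk → α * c * S.card ≤ ((Gam A S).card : ℝ)

/-- ℓ¹ norm on `ℝⁿ`. -/
noncomputable def l1 {n : ℕ} (u : Fin n → ℝ) : ℝ := ∑ i, |u i|

/-- `z` has at most `k` nonzero entries. -/
def IsKSparse {n : ℕ} (k : ℕ) (z : Fin n → ℝ) : Prop :=
  (Finset.univ.filter (fun i => z i ≠ 0)).card ≤ k

/-- `xk` is a best `k`-sparse nonnegative approximation of `x` in ℓ¹. -/
def BestKSparse {n : ℕ} (k : ℕ) (x xk : Fin n → ℝ) : Prop :=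
  (∀ i, 0 ≤ xk i) ∧ IsKSparse k xk ∧
    ∀ z : Fin n → ℝ, (∀ i, 0 ≤ z i) → IsKSparse k z →
      l1 (fun i => x i - xk i) ≤ l1 (fun i => x i - z i)


/-- `S' = {i ∈ X : N_x(i) ⊆ Γ(X₊)}`. -/
def Sprime {n m : ℕ} (A : Fin m → Fin n → Bool) (P : Finset (Fin n)) : Finset (Fin n) :=
  Finset.univ.filter (fun i => nhdX A i ⊆ Gam A P)

/-- One step of the level-set construction: given the union `U` of previous levels
`S_1, …, S_{ℓ-1}`, this is `S_ℓ`. -/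
def nextS {n m : ℕ} (A : Fin m → Fin n → Bool) (P U : Finset (Fin n)) : Finset (Fin n) :=
  (Sprime A P).filter (fun i => ∃ j ∈ Gam A P, nhdY A j ∩ (Sprime A P \ U) = {i})

/-- `Uacc A P ℓ = S_1 ∪ ⋯ ∪ S_ℓ`. -/
def Uacc {n m : ℕ} (A : Fin m → Fin n → Bool) (P : Finset (Fin n)) : ℕ → Finset (Fin n)
  | 0 => ∅
  | l + 1 => Uacc A P l ∪ nextS A P (Uacc A P l)

/-- The level sets `S_ℓ`: `S_0 = X \ S'` and, for `ℓ ≥ 1`,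
`S_ℓ = {i ∈ S' : ∃ j ∈ Γ(X₊), N_y(j) ∩ (S' \ (S_1 ∪ ⋯ ∪ S_{ℓ-1})) = {i}}`. -/
def Slevel {n m : ℕ} (A : Fin m → Fin n → Bool) (P : Finset (Fin n)) : ℕ → Finset (Fin n)
  | 0 => Finset.univ \ Sprime A P
  | l + 1 => nextS A P (Uacc A P l)

end MP

open MP Finset

section Aux

variable {n m : ℕ} (A : Fin m → Fin n → Bool)

lemma mem_nhdX' {i : Fin n} {j : Fin m} : j ∈ nhdX A i ↔ A j i = true := by
  simp [nhdX]

lemma mem_nhdY' {i : Fin n} {j : Fin m} : i ∈ nhdY A j ↔ A j i = true := by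
  simp [nhdY]

lemma gam_subset_of_subset_sprime {P T : Finset (Fin n)} (hT : T ⊆ Sprime A P) :
    Gam A T ⊆ Gam A P := by
  intro j hj
  rcases Finset.mem_biUnion.1 hj with ⟨i, hi, hji⟩
  have h := hT hi
  simp only [Sprime, Finset.mem_filter] at h
  exact h.2 hji

lemma gam_card_le {c : ℕ} (hreg : ∀ i, (nhdX A i).card = c) (S : Finset (Fin n)) :
    (Gam A S).card ≤ c * S.card := by
  calc (Gam A S).card ≤ ∑ i ∈ S, (nhdX A i).card := Finset.card_biUnion_le
  _ = c * S.card := by simp [hreg, mul_comm]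

lemma double_count {c : ℕ} (hreg : ∀ i, (nhdX A i).card = c) (T : Finset (Fin n)) :
    ∑ j ∈ Gam A T, (nhdY A j ∩ T).card = c * T.card := by
  have h1 : ∀ j : Fin m, (nhdY A j ∩ T).card = ∑ i ∈ T, if A j i = true then 1 else 0 := by
    intro j
    rw [show nhdY A j ∩ T = T.filter (fun i => A j i = true) by
      ext i; simp [nhdY, and_comm]]
    exact Finset.card_filter _ _
  have h2 : ∑ j : Fin m, (nhdY A j ∩ T).card = ∑ i ∈ T, (nhdX A i).card := by
    simp only [h1]
    rw [Finset.sum_comm]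
    refine Finset.sum_congr rfl fun i _ => ?_
    rw [nhdX, Finset.card_filter]
  rw [Finset.sum_subset (Finset.subset_univ _), h2]
  · simp [hreg, mul_comm]
  · intro j _ hj
    rw [Finset.card_eq_zero, Finset.eq_empty_iff_forall_notMem]
    intro i hi
    rcases Finset.mem_inter.1 hi with ⟨hi1, hi2⟩
    exact hj (Finset.mem_biUnion.2 ⟨i, hi2, (mem_nhdX' A).2 ((mem_nhdY' A).1 hi1)⟩)

lemma nextS_subset (P U : Finset (Fin n)) : nextS A P U ⊆ Sprime A P \ U := by
  intro i hi
  simp only [nextS, Finset.mem_filter] at hi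
  rcases hi with ⟨_, j, _, hji⟩
  have h : i ∈ nhdY A j ∩ (Sprime A P \ U) := by
    rw [hji]; exact Finset.mem_singleton_self i
  exact (Finset.mem_inter.1 h).2

lemma sprime_card_le {c d k : ℕ} (hc : 0 < c) {ε : ℝ} (hε : 0 < ε)
    (hreg : IsRegular A c d)
    (hexp : IsExpander A c (Nat.floor (2 * (k : ℝ) / (1 + 2 * ε) + 1)) (1 / 2 + ε))
    (P : Finset (Fin n)) (hP : P.card ≤ k) :
    (Sprime A P).card ≤ Nat.floor (2 * (k : ℝ) / (1 + 2 * ε) + 1) := by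
  set kk := Nat.floor (2 * (k : ℝ) / (1 + 2 * ε) + 1) with hkk
  by_contra hcon
  push_neg at hcon
  obtain ⟨T, hTs, hTc⟩ := Finset.exists_subset_card_eq hcon.le
  have hexpT : (1 / 2 + ε) * c * (kk : ℝ) ≤ ((Gam A T).card : ℝ) := by
    have := hexp T (le_of_eq hTc)
    rwa [hTc] at this
  have hGam : ((Gam A T).card : ℝ) ≤ (c : ℝ) * k := by
    have h1 : (Gam A T).card ≤ (Gam A P).card :=
      Finset.card_le_card (gam_subset_of_subset_sprime A hTs)
    have h2 : (Gam A P).card ≤ c * P.card := gam_card_le A hreg.1 P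
    have h3 : c * P.card ≤ c * k := Nat.mul_le_mul_left c hP
    exact_mod_cast (h1.trans h2).trans h3
  have hden : (0 : ℝ) < 1 + 2 * ε := by linarith
  have hfl : 2 * (k : ℝ) / (1 + 2 * ε) < (kk : ℝ) := by
    have := Nat.sub_one_lt_floor (2 * (k : ℝ) / (1 + 2 * ε) + 1)
    rw [← hkk] at this
    linarith
  have hkey : (c : ℝ) * k < (1 / 2 + ε) * c * kk := by
    have hmul : (1 / 2 + ε) * c * (2 * (k : ℝ) / (1 + 2 * ε)) < (1 / 2 + ε) * c * kk := by
      apply mul_lt_mul_of_pos_left hfl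
      positivity
    have hid : (1 / 2 + ε) * c * (2 * (k : ℝ) / (1 + 2 * ε)) = (c : ℝ) * k := by
      field_simp
    linarith
  linarith

lemma step_bound {c d k : ℕ} (hc : 0 < c) {ε : ℝ} (hε : 0 < ε)
    (hreg : IsRegular A c d)
    (hexp : IsExpander A c (Nat.floor (2 * (k : ℝ) / (1 + 2 * ε) + 1)) (1 / 2 + ε))
    (P : Finset (Fin n)) (hP : P.card ≤ k) (U : Finset (Fin n)) :
    2 * ε * ((Sprime A P \ U).card : ℝ) ≤ ((nextS A P U).card : ℝ) := by
  set T := Sprime A P \ U with hT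
  have hTsub : T ⊆ Sprime A P := Finset.sdiff_subset
  have hTk : T.card ≤ Nat.floor (2 * (k : ℝ) / (1 + 2 * ε) + 1) :=
    le_trans (Finset.card_le_card hTsub) (sprime_card_le A hc hε hreg hexp P hP)
  have hexpT : (1 / 2 + ε) * c * (T.card : ℝ) ≤ ((Gam A T).card : ℝ) := hexp T hTk
  set W := (Gam A T).filter (fun j => (nhdY A j ∩ T).card = 1) with hW
  have hWsub : W ⊆ Gam A T := Finset.filter_subset _ _
  have hsum : ∑ j ∈ Gam A T, (nhdY A j ∩ T).card = c * T.card := double_count A hreg.1 T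
  have key : 2 * (Gam A T).card ≤ c * T.card + W.card := by
    have h1 : ∑ j ∈ W, (nhdY A j ∩ T).card = W.card := by
      rw [Finset.sum_congr rfl (fun j hj => (Finset.mem_filter.1 hj).2)]
      simp
      rfl
    have h2 : (Gam A T \ W).card * 2 ≤ ∑ j ∈ Gam A T \ W, (nhdY A j ∩ T).card := by
      have := Finset.card_nsmul_le_sum (Gam A T \ W)
          (fun j => (nhdY A j ∩ T).card) 2 ?_
      · simpa [smul_eq_mul] using this
      · intro j hj
        rcases Finset.mem_sdiff.1 hj with ⟨hjG, hjW⟩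
        have hne : (nhdY A j ∩ T).card ≠ 1 := by
          intro h; exact hjW (Finset.mem_filter.2 ⟨hjG, h⟩)
        have hpos : 0 < (nhdY A j ∩ T).card := by
          rcases Finset.mem_biUnion.1 hjG with ⟨i, hiT, hji⟩
          apply Finset.card_pos.2
          exact ⟨i, Finset.mem_inter.2 ⟨(mem_nhdY' A).2 ((mem_nhdX' A).1 hji), hiT⟩⟩
        show 2 ≤ (nhdY A j ∩ T).card
        omega
    have h3 : ∑ j ∈ Gam A T \ W, (nhdY A j ∩ T).card + ∑ j ∈ W, (nhdY A j ∩ T).card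
        = ∑ j ∈ Gam A T, (nhdY A j ∩ T).card := Finset.sum_sdiff hWsub
    have h4 : (Gam A T \ W).card + W.card = (Gam A T).card :=
      Finset.card_sdiff_add_card_eq_card hWsub
    omega
  have hWsub2 : W ⊆ Gam A (nextS A P U) := by
    intro j hj
    rcases Finset.mem_filter.1 hj with ⟨hjG, hcard⟩
    obtain ⟨i, hi⟩ := Finset.card_eq_one.1 hcard
    have hiT : i ∈ nhdY A j ∩ T := by rw [hi]; exact Finset.mem_singleton_self i
    rcases Finset.mem_inter.1 hiT with ⟨hiY, hiT'⟩
    have hjP : j ∈ Gam A P := gam_subset_of_subset_sprime A hTsub hjG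
    have hiNext : i ∈ nextS A P U := by
      simp only [nextS, Finset.mem_filter]
      refine ⟨hTsub hiT', j, hjP, ?_⟩
      rw [← hT]; exact hi
    exact Finset.mem_biUnion.2 ⟨i, hiNext, (mem_nhdX' A).2 ((mem_nhdY' A).1 hiY)⟩
  have hWle : (W.card : ℝ) ≤ (c : ℝ) * ((nextS A P U).card : ℝ) := by
    have := (Finset.card_le_card hWsub2).trans (gam_card_le A hreg.1 (nextS A P U))
    exact_mod_cast this
  have keyR : 2 * ((Gam A T).card : ℝ) ≤ (c : ℝ) * T.card + W.card := by
    exact_mod_cast key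
  have hcpos : (0 : ℝ) < c := by exact_mod_cast hc
  have h5 : (c : ℝ) * (2 * ε * (T.card : ℝ)) ≤ (c : ℝ) * ((nextS A P U).card : ℝ) := by
    nlinarith
  exact le_of_mul_le_mul_left h5 hcpos

end Aux

/-- **Exhaustion of the level sets.** For `ℓ ≥ 1`,
`|S_ℓ| ≥ 2ε·|S' \ (S_1 ∪ ⋯ ∪ S_{ℓ-1})|`; consequently
`|S' \ (S_1 ∪ ⋯ ∪ S_ℓ)| ≤ (1-2ε)^ℓ |S'|`, and `S_ℓ = ∅` once `(1-2ε)^{ℓ-1}|S'| < 1`. -/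
theorem level_set_exhaustion (n m c d k : ℕ)
    (hn : 0 < n) (hm : 0 < m) (hc : 0 < c) (hd : 0 < d) (hk : 0 < k)
    (A : Fin m → Fin n → Bool) (ε : ℝ) (hε : 0 < ε)
    (hreg : IsRegular A c d)
    (hexp : IsExpander A c (Nat.floor (2 * (k : ℝ) / (1 + 2 * ε) + 1)) (1 / 2 + ε))
    (P : Finset (Fin n)) (hP : P.card ≤ k) :
    (∀ l : ℕ, 2 * ε * (((Sprime A P \ Uacc A P l)).card : ℝ) ≤
        ((Slevel A P (l + 1)).card : ℝ)) ∧
    (∀ l : ℕ, (((Sprime A P \ Uacc A P l)).card : ℝ) ≤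
        (1 - 2 * ε) ^ l * ((Sprime A P).card : ℝ)) ∧
    (∀ l : ℕ, (1 - 2 * ε) ^ l * ((Sprime A P).card : ℝ) < 1 →
        Slevel A P (l + 1) = ∅) := by
  have hc' : 0 < c := hc
  have step : ∀ U : Finset (Fin n),
      2 * ε * ((Sprime A P \ U).card : ℝ) ≤ ((nextS A P U).card : ℝ) :=
    fun U => step_bound A hc hε hreg hexp P hP U
  have hSl : ∀ l : ℕ, Slevel A P (l + 1) = nextS A P (Uacc A P l) := fun l => rfl
  have part1 : ∀ l : ℕ, 2 * ε * (((Sprime A P \ Uacc A P l)).card : ℝ) ≤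
      ((Slevel A P (l + 1)).card : ℝ) := by
    intro l; rw [hSl l]; exact step _
  have hrec : ∀ l : ℕ, ((Sprime A P \ Uacc A P (l + 1)).card : ℝ)
      = ((Sprime A P \ Uacc A P l).card : ℝ) - ((Slevel A P (l + 1)).card : ℝ) := by
    intro l
    have hsub : nextS A P (Uacc A P l) ⊆ Sprime A P \ Uacc A P l := nextS_subset A _ _
    have heq : Sprime A P \ Uacc A P (l + 1)
        = (Sprime A P \ Uacc A P l) \ nextS A P (Uacc A P l) := by
      show Sprime A P \ (Uacc A P l ∪ nextS A P (Uacc A P l)) = _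
      ext i
      simp only [Finset.mem_sdiff, Finset.mem_union]
      tauto
    rw [hSl l, heq, Finset.card_sdiff_of_subset hsub,
      Nat.cast_sub (Finset.card_le_card hsub)]
  have part2 : ∀ l : ℕ, (((Sprime A P \ Uacc A P l)).card : ℝ) ≤
      (1 - 2 * ε) ^ l * ((Sprime A P).card : ℝ) := by
    by_cases h2e : 0 ≤ 1 - 2 * ε
    · intro l
      induction l with
      | zero => simp [Uacc]
      | succ l ih =>
        have hs := part1 l
        have hnn : (0 : ℝ) ≤ ((Sprime A P \ Uacc A P l).card : ℝ) := Nat.cast_nonneg _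
        calc ((Sprime A P \ Uacc A P (l + 1)).card : ℝ)
            = ((Sprime A P \ Uacc A P l).card : ℝ) - ((Slevel A P (l + 1)).card : ℝ) :=
              hrec l
          _ ≤ (1 - 2 * ε) * ((Sprime A P \ Uacc A P l).card : ℝ) := by linarith
          _ ≤ (1 - 2 * ε) * ((1 - 2 * ε) ^ l * ((Sprime A P).card : ℝ)) :=
              mul_le_mul_of_nonneg_left ih h2e
          _ = (1 - 2 * ε) ^ (l + 1) * ((Sprime A P).card : ℝ) := by ring
    · push_neg at h2e
      have h0 : Sprime A P = ∅ := by
        have hs := part1 0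
        have hsub : Slevel A P 1 ⊆ Sprime A P \ Uacc A P 0 := by
          rw [hSl 0]; exact nextS_subset A _ _
        have hle : ((Slevel A P 1).card : ℝ) ≤ ((Sprime A P \ Uacc A P 0).card : ℝ) := by
          exact_mod_cast Finset.card_le_card hsub
        have hz : ((Sprime A P \ Uacc A P 0).card : ℝ) ≤ 0 := by nlinarith
        have : (Sprime A P \ Uacc A P 0).card = 0 := by exact_mod_cast le_antisymm hz (Nat.cast_nonneg _)
        have he : Sprime A P \ Uacc A P 0 = ∅ := Finset.card_eq_zero.1 this
        simpa [Uacc] using he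
      intro l
      simp [h0]
  refine ⟨part1, part2, ?_⟩
  intro l hl
  have h1 : ((Sprime A P \ Uacc A P l).card : ℝ) < 1 := lt_of_le_of_lt (part2 l) hl
  have h2 : (Sprime A P \ Uacc A P l).card = 0 := by
    have : (Sprime A P \ Uacc A P l).card < 1 := by exact_mod_cast h1
    omega
  have h3 : Sprime A P \ Uacc A P l = ∅ := Finset.card_eq_zero.1 h2
  have h4 : Slevel A P (l + 1) ⊆ Sprime A P \ Uacc A P l := by
    rw [hSl l]; exact nextS_subset A _ _
  rw [h3] at h4
  exact Finset.subset_empty.1 h4
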